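/- arXiv:1207.4257 — 2 statements merged into one kernel-verified Lean document; each statement's English description precedes it below -/
import Mathlib

section
/- Let $\mathfrak{h}_{2n+1}$ be the $(2n+1)$-dimensional Heisenberg Lie algebra with basis $\{x_1, \ldots, x_n, y_1, \ldots, y_n, z\}$, $[x_i, y_i] = z$ and all other brackets zero. Let $B = (b_{ij})$ be a symmetric $n \times n$ matrix over $k$ and $E = (e_i) \in k^n$. Define $\delta(x_i) = e_i\, z \otimes z$, $\delta(z) = 0$, and $\delta(y_i) = \sum_j b_{ij}(x_j \otimes z + z \otimes x_j)$. Then $(\mathfrak{h}_{2n+1}, \delta)$ is a coassociative Lie algebra. -/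
open TensorProduct

noncomputable section

variable (k : Type*) [Field k]

def Coassoc {V : Type*} [AddCommGroup V] [Module k V] (δ : V →ₗ[k] V ⊗[k] V) : Prop :=
  (TensorProduct.assoc k V V V).toLinearMap ∘ₗ (TensorProduct.map δ LinearMap.id) ∘ₗ δ
    = (TensorProduct.map LinearMap.id δ) ∘ₗ δ

abbrev UEA (L : Type*) [LieRing L] [LieAlgebra k L] := UniversalEnvelopingAlgebra k L

attribute [local instance 100] LieRing.ofAssociativeRing

/-- The canonical embedding `L → U(L)`, as a linear map. -/
def emb (L : Type*) [LieRing L] [LieAlgebra k L] : L →ₗ[k] UEA k L :=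
  (UniversalEnvelopingAlgebra.ι k).toLinearMap

/-- The canonical map `L ⊗ L → U(L) ⊗ U(L)`. -/
def emb2 (L : Type*) [LieRing L] [LieAlgebra k L] :
    L ⊗[k] L →ₗ[k] UEA k L ⊗[k] UEA k L :=
  TensorProduct.map (emb k L) (emb k L)

/-- The compatibility condition (E1.1.1)=(E1.2.2) for a coassociative Lie algebra,
stated inside `U(L) ⊗ U(L)`, where brackets are ring commutators.  (It encodes both
the identity `δ([a,b]) = b₁ ⊗ [a,b₂] + [a,b₁] ⊗ b₂ + [a₁,b] ⊗ a₂ + a₁ ⊗ [a₂,b] +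
[δ(a),δ(b)]` and the requirement that `[δ(a),δ(b)]` lies in `L ⊗ L`.) -/
def Compat {L : Type*} [LieRing L] [LieAlgebra k L] (δ : L →ₗ[k] L ⊗[k] L) : Prop :=
  ∀ a b : L,
    emb2 k L (δ ⁅a, b⁆) =
      ⁅(emb k L a) ⊗ₜ[k] (1 : UEA k L) + (1 : UEA k L) ⊗ₜ[k] (emb k L a), emb2 k L (δ b)⁆ +
      ⁅emb2 k L (δ a), (emb k L b) ⊗ₜ[k] (1 : UEA k L) + (1 : UEA k L) ⊗ₜ[k] (emb k L b)⁆ +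
      ⁅emb2 k L (δ a), emb2 k L (δ b)⁆


section MyAux
variable {L : Type*} [LieRing L] [LieAlgebra k L]

lemma emb_mul (a c : L) :
    emb k L a * emb k L c = emb k L c * emb k L a + emb k L ⁅a, c⁆ := by
  have h := (UniversalEnvelopingAlgebra.ι k (L := L)).map_lie (x := a) (y := c)
  rw [Ring.lie_def] at h
  have h2 : emb k L ⁅a,c⁆ = emb k L a * emb k L c - emb k L c * emb k L a := h
  rw [h2]; abel

def myC : (UEA k L ⊗[k] UEA k L) →ₗ[k] (UEA k L ⊗[k] UEA k L) →ₗ[k] (UEA k L ⊗[k] UEA k L) :=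
  LinearMap.mul k _ - (LinearMap.mul k _).flip

lemma myC_apply (u v : UEA k L ⊗[k] UEA k L) : myC k u v = u * v - v * u := rfl

lemma myC_tmul (p q r s : UEA k L) :
    myC k (p ⊗ₜ[k] q) (r ⊗ₜ[k] s) = (p * r) ⊗ₜ[k] (q * s) - (r * p) ⊗ₜ[k] (s * q) := by
  simp [myC_apply, Algebra.TensorProduct.tmul_mul_tmul]

def myΔ : L →ₗ[k] UEA k L ⊗[k] UEA k L :=
  ((TensorProduct.mk k (UEA k L) (UEA k L)).flip 1) ∘ₗ emb k L
    + (TensorProduct.mk k (UEA k L) (UEA k L) 1) ∘ₗ emb k L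

lemma myΔ_apply (a : L) : myΔ k a = emb k L a ⊗ₜ[k] 1 + 1 ⊗ₜ[k] emb k L a := rfl

lemma emb2_tmul (a c : L) : emb2 k L (a ⊗ₜ[k] c) = emb k L a ⊗ₜ[k] emb k L c := rfl

def myF (δ : L →ₗ[k] L ⊗[k] L) : L →ₗ[k] L →ₗ[k] UEA k L ⊗[k] UEA k L :=
  (LinearMap.llcomp k L L _ ((emb2 k L) ∘ₗ δ)) ∘ₗ (LieAlgebra.ad k L).toLinearMap

lemma myF_apply (δ : L →ₗ[k] L ⊗[k] L) (a c : L) : myF k δ a c = emb2 k L (δ ⁅a, c⁆) := rfl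

def myG (δ : L →ₗ[k] L ⊗[k] L) : L →ₗ[k] L →ₗ[k] UEA k L ⊗[k] UEA k L :=
  ((myC k).compl₂ ((emb2 k L) ∘ₗ δ)) ∘ₗ (myΔ k)
    + (((myC k).compl₂ (myΔ k)) ∘ₗ ((emb2 k L) ∘ₗ δ))
    + (((myC k).compl₂ ((emb2 k L) ∘ₗ δ)) ∘ₗ ((emb2 k L) ∘ₗ δ))

lemma myG_apply (δ : L →ₗ[k] L ⊗[k] L) (a c : L) :
    myG k δ a c = myC k (myΔ k a) (emb2 k L (δ c)) + myC k (emb2 k L (δ a)) (myΔ k c)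
      + myC k (emb2 k L (δ a)) (emb2 k L (δ c)) := rfl

end MyAux

lemma ite_add_self' {α : Type*} [AddGroup α] (P : Prop) [Decidable P] (a c : α) :
    (if P then a + c else a) = a + (if P then c else 0) := by split <;> simp

/-- Example 4.3(b): on the `(2n+1)`-dimensional Heisenberg Lie algebra with basis
`x₁,…,xₙ, y₁,…,yₙ, z` and `[xᵢ, yⱼ] = δᵢⱼ z` (all other brackets zero), the coproduct
`δ(xᵢ) = eᵢ z ⊗ z`, `δ(z) = 0`, `δ(yᵢ) = Σⱼ bᵢⱼ (xⱼ ⊗ z + z ⊗ xⱼ)` with `B` symmetric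
defines a coassociative Lie algebra. -/
theorem example_heisenberg_coassociative_lie
    {L : Type*} [LieRing L] [LieAlgebra k L] {n : ℕ}
    (b : Module.Basis (Fin n ⊕ Fin n ⊕ Unit) k L)
    (X Y : Fin n → L) (z : L)
    (hX : ∀ i, X i = b (Sum.inl i)) (hY : ∀ i, Y i = b (Sum.inr (Sum.inl i)))
    (hz : z = b (Sum.inr (Sum.inr ())))
    (hXX : ∀ i j, ⁅X i, X j⁆ = (0 : L)) (hYY : ∀ i j, ⁅Y i, Y j⁆ = (0 : L))
    (hXY : ∀ i j, ⁅X i, Y j⁆ = if i = j then z else 0)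
    (hzX : ∀ i, ⁅z, X i⁆ = (0 : L)) (hzY : ∀ i, ⁅z, Y i⁆ = (0 : L))
    (B : Matrix (Fin n) (Fin n) k) (hBsymm : ∀ i j, B i j = B j i)
    (E : Fin n → k)
    (δ : L →ₗ[k] L ⊗[k] L)
    (hδX : ∀ i, δ (X i) = E i • (z ⊗ₜ[k] z))
    (hδz : δ z = 0)
    (hδY : ∀ i, δ (Y i) = ∑ j, B i j • (X j ⊗ₜ[k] z + z ⊗ₜ[k] X j)) :
    Coassoc k δ ∧ Compat k δ := by
  constructor
  · -- Coassoc
    apply b.ext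
    intro i
    simp only [LinearMap.comp_apply, LinearEquiv.coe_coe]
    rcases i with i | i | ⟨⟩
    · rw [← hX, hδX]
      simp [hδz, TensorProduct.smul_tmul', map_smul]
    · rw [← hY, hδY]
      simp [hδz, hδX, TensorProduct.smul_tmul', map_smul, TensorProduct.tmul_smul,
        TensorProduct.add_tmul, TensorProduct.tmul_add, Finset.smul_sum]
      exact Finset.sum_congr rfl fun x _ => by
        rw [smul_comm (B i x) (E x), TensorProduct.smul_tmul, TensorProduct.smul_tmul']
    · rw [← hz, hδz]; simp
  · -- Compat
    have hYX : ∀ i j, ⁅Y i, X j⁆ = -(if j = i then z else (0:L)) := fun i j => by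
      rw [← lie_skew, hXY]
    have hXz : ∀ i, ⁅X i, z⁆ = (0:L) := fun i => by rw [← lie_skew, hzX, neg_zero]
    have hYz : ∀ i, ⁅Y i, z⁆ = (0:L) := fun i => by rw [← lie_skew, hzY, neg_zero]
    have czx : ∀ i, emb k L z * emb k L (X i) = emb k L (X i) * emb k L z := fun i => by
      rw [emb_mul, hzX, map_zero, add_zero]
    have czy : ∀ i, emb k L z * emb k L (Y i) = emb k L (Y i) * emb k L z := fun i => by
      rw [emb_mul, hzY, map_zero, add_zero]
    have cxx : ∀ i j, emb k L (X i) * emb k L (X j) = emb k L (X j) * emb k L (X i) :=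
      fun i j => by rw [emb_mul, hXX, map_zero, add_zero]
    have cxy : ∀ i j, emb k L (X i) * emb k L (Y j)
        = emb k L (Y j) * emb k L (X i) + (if i = j then emb k L z else 0) := fun i j => by
      rw [emb_mul, hXY]; split <;> simp
    have dz : ∀ (P : Prop) (_ : Decidable P), emb2 k L (δ (if P then z else 0)) = 0 := by
      intro P hP
      split <;> simp [hδz]
    have key : myF k δ = myG k δ := by
      apply b.ext; intro i; apply b.ext; intro j
      rcases i with p | p | ⟨⟩ <;> rcases j with q | q | ⟨⟩ <;>
        simp only [← hX, ← hY, ← hz, myF_apply, myG_apply, myΔ_apply] <;>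
        simp [hXX, hYY, hXY, hYX, hXz, hYz, hzX, hzY, lie_self, hδX, hδz, hδY,
          map_sum, map_add, map_smul, Finset.smul_sum, smul_add, smul_sub,
          emb2_tmul, myC_tmul, czx, czy, cxx, cxy, hBsymm,
          TensorProduct.add_tmul, TensorProduct.tmul_add, TensorProduct.smul_tmul',
          TensorProduct.tmul_smul, TensorProduct.ite_tmul, TensorProduct.tmul_ite,
          mul_add, add_mul, dz, Finset.sum_ite_eq, Finset.sum_ite_eq',
          sub_self, smul_ite, smul_smul, mul_comm, ite_add_self',
          Finset.sum_add_distrib, Finset.sum_neg_distrib] <;>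
        try abel
    intro a c
    have h := LinearMap.congr_fun (LinearMap.congr_fun key a) c
    simpa only [myF_apply, myG_apply, myΔ_apply, myC_apply, Ring.lie_def] using h

end
end

section
/- Let $L$ be an anti-cocommutative coassociative Lie algebra over a field of characteristic not 2 such that its enveloping bialgebra $U(L)$ is a Hopf algebra with involutory antipode $S$ (i.e., $S^2 = \mathrm{id}$). Then $S(x) = -x$ for all $x \in L$. -/
open TensorProduct

noncomputable section

attribute [local instance 100] LieRing.ofAssociativeRing

variable (k : Type*) [Field k]

/-- Auxiliary: anti-cocommutativity plus coassociativity force `(δ ⊗ 1)δ = 0` and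
`(1 ⊗ δ)δ = 0` (in characteristic ≠ 2). -/
lemma aux_delta_delta_zero {k : Type*} [Field k] {L : Type*} [AddCommGroup L] [Module k L]
    (hchar : (2:k) ≠ 0)
    (δ : L →ₗ[k] L ⊗[k] L)
    (hco : (TensorProduct.assoc k L L L).toLinearMap ∘ₗ (TensorProduct.map δ LinearMap.id) ∘ₗ δ
      = (TensorProduct.map LinearMap.id δ) ∘ₗ δ)
    (hanti : (TensorProduct.comm k L L).toLinearMap ∘ₗ δ = -δ) :
    (TensorProduct.map δ LinearMap.id) ∘ₗ δ = 0 ∧ (TensorProduct.map LinearMap.id δ) ∘ₗ δ = 0 := by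
  set A := (TensorProduct.assoc k L L L).toLinearMap with hA
  set σ : L ⊗[k] (L ⊗[k] L) →ₗ[k] L ⊗[k] (L ⊗[k] L) :=
    (LinearMap.lTensor L (TensorProduct.comm k L L).toLinearMap) ∘ₗ
      (TensorProduct.leftComm k L L L).toLinearMap with hσ
  have hσtmul : ∀ (a b c : L), σ (a ⊗ₜ[k] (b ⊗ₜ[k] c)) = b ⊗ₜ[k] (c ⊗ₜ[k] a) := by
    intro a b c
    simp [hσ, TensorProduct.leftComm_tmul]
  have hσ3 : σ ∘ₗ σ ∘ₗ σ = LinearMap.id := by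
    ext a b c
    simp [hσtmul]
  set T := (TensorProduct.map LinearMap.id δ) ∘ₗ δ with hT
  have hkey : σ ∘ₗ (TensorProduct.map LinearMap.id δ) =
      A ∘ₗ (TensorProduct.map δ LinearMap.id) ∘ₗ (TensorProduct.comm k L L).toLinearMap := by
    apply TensorProduct.ext'
    intro a b
    simp only [LinearMap.comp_apply, TensorProduct.map_tmul, LinearMap.id_apply,
      TensorProduct.comm_tmul, LinearEquiv.coe_coe]
    induction δ b using TensorProduct.induction_on with
    | zero => simp
    | tmul c d => simp [hσtmul, hA]
    | add u v hu hv => simp [TensorProduct.tmul_add, add_tmul, hu, hv]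
  have h1 : ∀ z, σ (T z) = -(T z) := by
    intro z
    have e1 : σ (T z) = (σ ∘ₗ (TensorProduct.map LinearMap.id δ)) (δ z) := rfl
    rw [e1, hkey]
    have e2 : (TensorProduct.comm k L L).toLinearMap (δ z) = -(δ z) := by
      have := LinearMap.congr_fun hanti z
      simpa using this
    simp only [LinearMap.comp_apply, LinearEquiv.coe_coe] at e2 ⊢
    rw [e2, map_neg, map_neg]
    have e3 := LinearMap.congr_fun hco z
    simp only [LinearMap.comp_apply, LinearEquiv.coe_coe] at e3
    rw [e3]
  have hTT : ∀ y, T y = - T y := by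
    intro y
    have h3 : σ (σ (σ (T y))) = T y := by
      have := LinearMap.congr_fun hσ3 (T y)
      simpa using this
    rw [h1, map_neg, h1, neg_neg, h1] at h3
    exact h3.symm
  have hT0 : T = 0 := by
    ext y
    have h := hTT y
    have h2 : (2:k) • T y = 0 := by
      rw [two_smul]; nth_rewrite 1 [h]; exact neg_add_cancel _
    rcases smul_eq_zero.mp h2 with h' | h'
    · exact absurd h' hchar
    · simpa using h'
  refine ⟨?_, hT0⟩
  apply LinearMap.ext
  intro x
  have h := LinearMap.congr_fun hco x
  rw [LinearMap.congr_fun hT0 x] at h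
  simp only [LinearMap.comp_apply, LinearEquiv.coe_coe, LinearMap.zero_apply] at h ⊢
  exact (map_eq_zero_iff _ (TensorProduct.assoc k L L L).injective).mp h

/-- Proposition 2.9: if `L` is an anti-cocommutative coassociative Lie algebra
(char k ≠ 2) whose enveloping bialgebra `U(L)` (with comultiplication
`Δ(a) = a ⊗ 1 + 1 ⊗ a + δ(a)` and counit `ε(a) = 0` on `L`) is a Hopf algebra with
involutory antipode `S`, then `S(x) = -x` for all `x ∈ L`. -/
theorem antipode_neg_on_L
    (hchar : (2 : k) ≠ 0)
    {L : Type*} [LieRing L] [LieAlgebra k L]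
    (δ : L →ₗ[k] L ⊗[k] L)
    (hcoassoc : Coassoc k δ)
    (hcompat : Compat k δ)
    (hanti : (TensorProduct.comm k L L).toLinearMap ∘ₗ δ = -δ)
    (ΔU : UEA k L →ₐ[k] UEA k L ⊗[k] UEA k L)
    (hΔ : ∀ a : L, ΔU (emb k L a) =
      (emb k L a) ⊗ₜ[k] (1 : UEA k L) + (1 : UEA k L) ⊗ₜ[k] (emb k L a) +
        emb2 k L (δ a))
    (εU : UEA k L →ₐ[k] k)
    (hε : ∀ a : L, εU (emb k L a) = 0)
    (S : UEA k L →ₗ[k] UEA k L)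
    (hS1 : ∀ u : UEA k L,
      LinearMap.mul' k (UEA k L) ((TensorProduct.map S LinearMap.id) (ΔU u)) =
        εU u • (1 : UEA k L))
    (hS2 : ∀ u : UEA k L,
      LinearMap.mul' k (UEA k L) ((TensorProduct.map LinearMap.id S) (ΔU u)) =
        εU u • (1 : UEA k L))
    (hinv : ∀ u : UEA k L, S (S u) = u) :
    ∀ x : L, S (emb k L x) = -(emb k L x) := by
  obtain ⟨hT1, hT2⟩ := aux_delta_delta_zero hchar δ hcoassoc hanti
  -- S(1) = 1
  have hSone : S (1 : UEA k L) = 1 := by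
    have h := hS1 1
    rw [map_one ΔU, map_one εU, one_smul, Algebra.TensorProduct.one_def,
      TensorProduct.map_tmul] at h
    simpa using h
  set H : L ⊗[k] L →ₗ[k] UEA k L :=
    (LinearMap.mul' k (UEA k L)) ∘ₗ (TensorProduct.map S LinearMap.id) ∘ₗ emb2 k L with hHdef
  -- Equation I: S(a) = -a - m((S ⊗ 1)(δ a)) for a ∈ L
  have EqI : ∀ a : L, S (emb k L a) = -(emb k L a) - H (δ a) := by
    intro a
    have h := hS1 (emb k L a)
    rw [hΔ a, hε a, zero_smul] at h
    simp only [map_add, TensorProduct.map_tmul, LinearMap.id_apply, LinearMap.mul'_apply,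
      hSone, mul_one, one_mul] at h
    have hHa : H (δ a) =
        (LinearMap.mul' k (UEA k L)) ((TensorProduct.map S LinearMap.id) (emb2 k L (δ a))) := rfl
    rw [← hHa] at h
    have h' : S (emb k L a) + (emb k L a + H (δ a)) = 0 := by rw [← add_assoc]; exact h
    rw [eq_neg_of_add_eq_zero_left h']
    abel
  -- H ∘ δ = -(m ∘ emb2 ∘ δ)
  have hHext : H = -((LinearMap.mul' k (UEA k L)) ∘ₗ emb2 k L) -
      (LinearMap.mul' k (UEA k L)) ∘ₗ (TensorProduct.map (H ∘ₗ δ) (emb k L)) := by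
    apply TensorProduct.ext'
    intro a b
    simp only [hHdef, LinearMap.comp_apply, LinearMap.sub_apply, LinearMap.neg_apply, emb2,
      TensorProduct.map_tmul, LinearMap.mul'_apply, LinearMap.id_apply]
    rw [EqI a, sub_mul, neg_mul]
    simp only [hHdef, LinearMap.comp_apply, emb2]
  -- key: S(x) = -x + m(emb2(δ x))
  have keyS : ∀ a : L, S (emb k L a) =
      -(emb k L a) + (LinearMap.mul' k (UEA k L)) (emb2 k L (δ a)) := by
    intro a
    have hz : (TensorProduct.map δ (LinearMap.id : L →ₗ[k] L)) (δ a) = 0 := by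
      have := LinearMap.congr_fun hT1 a
      simpa using this
    have hmc : (TensorProduct.map (H ∘ₗ δ) (emb k L)) (δ a) = 0 := by
      have hmapcomp : (TensorProduct.map (H ∘ₗ δ) (emb k L)) =
          (TensorProduct.map H (emb k L)) ∘ₗ (TensorProduct.map δ (LinearMap.id : L →ₗ[k] L)) := by
        rw [← TensorProduct.map_comp]; simp
      rw [hmapcomp, LinearMap.comp_apply, hz, map_zero]
    have h2 : H (δ a) = -((LinearMap.mul' k (UEA k L)) (emb2 k L (δ a))) := by
      have he := LinearMap.congr_fun hHext (δ a)
      simp only [LinearMap.sub_apply, LinearMap.neg_apply, LinearMap.comp_apply] at he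
      rw [hmc, map_zero, sub_zero] at he
      exact he
    rw [EqI a, h2]
    abel
  -- S(ab) = ba for primitive a b
  have hprim : ∀ a b : L, δ a = 0 → δ b = 0 →
      S (emb k L a * emb k L b) = emb k L b * emb k L a := by
    intro a b ha hb
    have hSa : S (emb k L a) = -(emb k L a) := by rw [keyS a, ha]; simp
    have hSb : S (emb k L b) = -(emb k L b) := by rw [keyS b, hb]; simp
    have hΔa : ΔU (emb k L a) = emb k L a ⊗ₜ[k] 1 + 1 ⊗ₜ[k] emb k L a := by
      rw [hΔ a, ha]; simp
    have hΔb : ΔU (emb k L b) = emb k L b ⊗ₜ[k] 1 + 1 ⊗ₜ[k] emb k L b := by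
      rw [hΔ b, hb]; simp
    have h := hS1 (emb k L a * emb k L b)
    rw [map_mul ΔU, hΔa, hΔb, map_mul εU, hε a, zero_mul, zero_smul] at h
    simp only [add_mul, mul_add, Algebra.TensorProduct.tmul_mul_tmul, one_mul, mul_one, map_add,
      TensorProduct.map_tmul, LinearMap.id_apply, LinearMap.mul'_apply, hSone, hSa, hSb,
      neg_mul, one_mul] at h
    rw [← sub_eq_zero, ← h]
    abel
  intro x
  -- represent δ x inside (ker δ) ⊗ (ker δ)
  set N := LinearMap.ker δ with hN
  have ht1 : (LinearMap.rTensor L δ) (δ x) = 0 := by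
    have e : (LinearMap.rTensor L δ) (δ x) =
        ((TensorProduct.map δ LinearMap.id) ∘ₗ δ) x := rfl
    rw [e, hT1]; rfl
  obtain ⟨s, hs⟩ := (Module.Flat.rTensor_exact L (LinearMap.exact_subtype_ker_map δ) (δ x)).mp ht1
  have ht2 : (LinearMap.lTensor N δ) s = 0 := by
    apply Module.Flat.rTensor_preserves_injective_linearMap (M := L ⊗[k] L)
      N.subtype N.injective_subtype
    rw [map_zero]
    have hc : (N.subtype.rTensor (L ⊗[k] L)) ∘ₗ (LinearMap.lTensor N δ)
        = (LinearMap.lTensor L δ) ∘ₗ (N.subtype.rTensor L) := by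
      rw [LinearMap.rTensor_comp_lTensor, LinearMap.lTensor_comp_rTensor]
    have hcs := LinearMap.congr_fun hc s
    simp only [LinearMap.comp_apply] at hcs
    rw [hcs, hs]
    have e : (LinearMap.lTensor L δ) (δ x) = ((TensorProduct.map LinearMap.id δ) ∘ₗ δ) x := rfl
    rw [e, hT2]; rfl
  obtain ⟨r, hr⟩ := (Module.Flat.lTensor_exact N (LinearMap.exact_subtype_ker_map δ) s).mp ht2
  have hδx : δ x = (TensorProduct.map N.subtype N.subtype) r := by
    rw [← hs, ← hr, ← LinearMap.comp_apply, LinearMap.rTensor_comp_lTensor]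
  set μ := (LinearMap.mul' k (UEA k L)) (emb2 k L (δ x)) with hμ
  -- S(μ) = -μ
  have hSμ : S μ = -μ := by
    have hP : ∀ u : N ⊗[k] N,
        S ((LinearMap.mul' k (UEA k L)) (emb2 k L ((TensorProduct.map N.subtype N.subtype) u)))
          = (LinearMap.mul' k (UEA k L))
              ((TensorProduct.comm k (UEA k L) (UEA k L))
                (emb2 k L ((TensorProduct.map N.subtype N.subtype) u))) := by
      intro u
      induction u using TensorProduct.induction_on with
      | zero => simp
      | tmul a b =>
        simp only [TensorProduct.map_tmul, emb2, LinearMap.mul'_apply, TensorProduct.comm_tmul,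
          Submodule.coe_subtype]
        exact hprim a.1 b.1 (LinearMap.mem_ker.mp a.2) (LinearMap.mem_ker.mp b.2)
      | add u v hu hv => simp only [map_add, hu, hv]
    have h1 := hP r
    rw [← hδx] at h1
    have hcomm2 : (TensorProduct.comm k (UEA k L) (UEA k L)) (emb2 k L (δ x))
        = emb2 k L ((TensorProduct.comm k L L) (δ x)) := by
      induction δ x using TensorProduct.induction_on with
      | zero => simp
      | tmul a b => simp [emb2]
      | add u v hu hv => simp only [map_add, hu, hv]
    have hcδ : (TensorProduct.comm k L L) (δ x) = -(δ x) := by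
      have := LinearMap.congr_fun hanti x
      simpa using this
    rw [hμ, h1, hcomm2, hcδ, map_neg, map_neg]
  -- conclude
  have h3 := hinv (emb k L x)
  rw [keyS x, ← hμ, map_add, map_neg, keyS x, ← hμ, hSμ] at h3
  have h5 : emb k L x - (μ + μ) = emb k L x := by
    nth_rewrite 2 [← h3]
    abel
  have h4 : (2:k) • μ = 0 := by
    rw [two_smul]; exact sub_eq_self.mp h5
  rcases smul_eq_zero.mp h4 with h' | h'
  · exact absurd h' hchar
  · rw [keyS x, ← hμ, h', add_zero]

end
end
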